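/- Let Ŝ_d be the group of permutations w of ℤ satisfying w(i+d) = w(i)+d for all i. For w in Ŝ_d, define a(w) = (Σ_{i=1}^d w(i) − Σ_{i=1}^d i)/d, inv_i(w) = |{i' < i : w(i') > w(i)}|, and Inv_i(w) = |{i' > i : w(i') < w(i)}| (both finite). Then Inv_i(w) − inv_i(w) = w(i) − i − a(w). -/

import Mathlib

open Equiv

/-- `inv_i(w) = |{i' < i : w(i') > w(i)}|` for `w` a permutation of `ℤ`. -/
noncomputable def ainv (w : Perm ℤ) (i : ℤ) : ℕ :=
  {i' : ℤ | i' < i ∧ w i < w i'}.ncard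

/-- `Inv_i(w) = |{i' > i : w(i') < w(i)}|` for `w` a permutation of `ℤ`. -/
noncomputable def aInv (w : Perm ℤ) (i : ℤ) : ℕ :=
  {i' : ℤ | i < i' ∧ w i' < w i}.ncard

/-- `a(w) = (Σ_{k=1}^d w(k) − Σ_{k=1}^d k)/d`. -/
noncomputable def aShift (d : ℕ) (w : Perm ℤ) : ℤ :=
  (∑ k ∈ Finset.Icc (1 : ℤ) (d : ℤ), (w k - k)) / (d : ℤ)

lemma shift_per (d : ℕ) (w : Perm ℤ) (hw : ∀ i : ℤ, w (i + d) = w i + d) :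
    ∀ (j k : ℤ), w (j + k * d) = w j + k * d := by
  have hneg : ∀ j : ℤ, w (j - d) = w j - d := by
    intro j
    have h := hw (j - d)
    rw [sub_add_cancel] at h
    omega
  intro j k
  induction k using Int.induction_on with
  | zero => simp
  | succ n ih =>
      have e : j + ((n : ℤ) + 1) * d = (j + n * d) + d := by ring
      rw [e, hw, ih]; ring
  | pred n ih =>
      have e : j + (-(n : ℤ) - 1) * d = (j + (-(n:ℤ)) * d) - d := by ring
      rw [e, hneg, ih]; ring

lemma eq_of_small_dvd (d : ℤ) (_hd : 0 < d) {r r' : ℤ} (h : d ∣ (r - r'))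
    (h1 : 1 ≤ r) (h2 : r ≤ d) (h1' : 1 ≤ r') (h2' : r' ≤ d) : r = r' := by
  have := Int.eq_zero_of_abs_lt_dvd h (abs_lt.mpr (by constructor <;> omega))
  omega

lemma w_mod_inj (d : ℕ) (w : Perm ℤ) (hper : ∀ j k : ℤ, w (j + k * d) = w j + k * d)
    {s s' : ℤ} (h : (d : ℤ) ∣ (w s - w s')) : (d : ℤ) ∣ (s - s') := by
  obtain ⟨t, ht⟩ := h
  have hc : (d : ℤ) * t = t * d := mul_comm _ _
  have h2 : w (s' + t * d) = w s := by rw [hper]; omega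
  have h3 := w.injective h2
  exact ⟨t, by omega⟩

lemma count_set (d : ℕ) (hd : 0 < d) (u v : ℤ → ℤ)
    (hu : ∀ j k : ℤ, u (j + k * d) = u j + k * d)
    (hv : ∀ j k : ℤ, v (j + k * d) = v j + k * d) (p q : ℤ) :
    {i' : ℤ | u i' < p ∧ q < v i'}.ncard
      = ∑ r ∈ Finset.Icc (1 : ℤ) (d : ℤ), ((p - u r - 1) / d - (q - v r) / d).toNat := by
  have hd' : (0 : ℤ) < d := by exact_mod_cast hd
  have hset : {i' : ℤ | u i' < p ∧ q < v i'}
      = ↑((Finset.Icc (1 : ℤ) (d : ℤ)).biUnion (fun r =>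
          (Finset.Ioc ((q - v r) / d) ((p - u r - 1) / d)).image (fun k => r + k * d))) := by
    ext i'
    simp only [Set.mem_setOf_eq, Finset.coe_biUnion, Set.mem_iUnion, Finset.mem_coe,
      Finset.mem_image, Finset.mem_Ioc, Finset.mem_Icc]
    constructor
    · rintro ⟨h1, h2⟩
      set r := (i' - 1) % d + 1 with hr
      set k := (i' - 1) / d with hk
      have hde := Int.mul_ediv_add_emod (i' - 1) d
      have hmn := Int.emod_nonneg (i' - 1) (ne_of_gt hd')
      have hml := Int.emod_lt_of_pos (i' - 1) hd'
      have hik : i' = r + k * d := by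
        have hc2 : ((i' - 1) / (d : ℤ)) * d = d * ((i' - 1) / d) := mul_comm _ _
        rw [hr, hk]; omega
      have hu' : u i' = u r + k * d := by rw [hik, hu]
      have hv' : v i' = v r + k * d := by rw [hik, hv]
      have hc : (d : ℤ) * k = k * d := mul_comm _ _
      refine ⟨r, ⟨by omega, by omega⟩, k, ⟨?_, ?_⟩, hik.symm⟩
      · exact (Int.ediv_lt_iff_lt_mul hd').mpr (by linarith)
      · exact (Int.le_ediv_iff_mul_le hd').mpr (by linarith)
    · rintro ⟨r, ⟨hr1, hr2⟩, k, ⟨hk1, hk2⟩, rfl⟩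
      have hu' : u (r + k * d) = u r + k * d := hu r k
      have hv' : v (r + k * d) = v r + k * d := hv r k
      have h1 := (Int.ediv_lt_iff_lt_mul hd').mp hk1
      have h2 := (Int.le_ediv_iff_mul_le hd').mp hk2
      constructor <;> omega
  rw [hset, Set.ncard_coe_finset]
  rw [Finset.card_biUnion]
  · refine Finset.sum_congr rfl fun r _ => ?_
    rw [Finset.card_image_of_injective _ (fun a b hab => by
      have : a * d = b * d := by omega
      exact mul_right_cancel₀ (ne_of_gt hd') this)]
    exact Int.card_Ioc _ _
  · intro r hr r' hr' hne
    simp only [Finset.mem_coe, Finset.mem_Icc] at hr hr'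
    rw [Function.onFun, Finset.disjoint_left]
    rintro x hx hx'
    simp only [Finset.mem_image, Finset.mem_Ioc] at hx hx'
    obtain ⟨k, _, rfl⟩ := hx
    obtain ⟨k', _, he⟩ := hx'
    have hdvd : (d : ℤ) ∣ (r - r') := ⟨k' - k, by linear_combination -he⟩
    exact hne (eq_of_small_dvd d hd' hdvd hr.1 hr.2 hr'.1 hr'.2)

lemma ediv_pred (d : ℕ) (hd : 0 < d) (C : ℤ) :
    (C - 1) / (d : ℤ) = if (d : ℤ) ∣ C then C / d - 1 else C / d := by
  have hd' : (0 : ℤ) < d := by exact_mod_cast hd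
  have h0 := Int.mul_ediv_add_emod C d
  have h1 := Int.emod_nonneg C (ne_of_gt hd')
  have h2 := Int.emod_lt_of_pos C hd'
  split_ifs with h
  · have hz : C % d = 0 := Int.emod_eq_zero_of_dvd h
    have e : (d : ℤ) * (C / d - 1) = d * (C / d) - d := by ring
    exact ((Int.ediv_emod_unique (a := C - 1) (b := d) (r := (d : ℤ) - 1)
      (q := C / d - 1) hd').mpr ⟨by omega, by omega, by omega⟩).1
  · have hz : C % d ≠ 0 := fun hz => h (Int.dvd_of_emod_eq_zero hz)
    exact ((Int.ediv_emod_unique (a := C - 1) (b := d) (r := C % d - 1)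
      (q := C / d) hd').mpr ⟨by omega, by omega, by omega⟩).1

lemma key_sub (d : ℕ) (hd : 0 < d) (A B : ℤ) (h1 : (d : ℤ) ∣ B → A = B)
    (h2 : (d : ℤ) ∣ A → (d : ℤ) ∣ B) :
    ((((A - 1) / d - B / d).toNat : ℤ)) - (((B - 1) / d - A / d).toNat : ℤ)
      = A / d - B / d := by
  by_cases hB : (d : ℤ) ∣ B
  · have hAB := h1 hB
    subst hAB
    rw [ediv_pred d hd A, if_pos hB]
    omega
  · have hA : ¬ (d : ℤ) ∣ A := fun h => hB (h2 h)
    rw [ediv_pred d hd A, if_neg hA, ediv_pred d hd B, if_neg hB]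
    omega

lemma sum_emod (d : ℕ) (hd : 0 < d) (x : ℤ → ℤ)
    (hx : ∀ r ∈ Finset.Icc (1 : ℤ) (d : ℤ), ∀ r' ∈ Finset.Icc (1 : ℤ) (d : ℤ),
      x r % d = x r' % d → r = r') :
    ∑ r ∈ Finset.Icc (1 : ℤ) (d : ℤ), x r % d = ∑ j ∈ Finset.Ico (0 : ℤ) (d : ℤ), j := by
  have hd' : (0 : ℤ) < d := by exact_mod_cast hd
  have hsub : (Finset.Icc (1 : ℤ) (d : ℤ)).image (fun r => x r % d) ⊆ Finset.Ico 0 d := by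
    intro j hj
    simp only [Finset.mem_image] at hj
    obtain ⟨r, _, rfl⟩ := hj
    simp only [Finset.mem_Ico]
    exact ⟨Int.emod_nonneg _ (ne_of_gt hd'), Int.emod_lt_of_pos _ hd'⟩
  have hcard : ((Finset.Icc (1 : ℤ) (d : ℤ)).image (fun r => x r % d)).card
      = (Finset.Ico (0 : ℤ) (d : ℤ)).card := by
    rw [Finset.card_image_of_injOn (fun a ha b hb hab => hx a ha b hb hab),
      Int.card_Icc, Int.card_Ico]
    omega
  have himg := Finset.eq_of_subset_of_card_le hsub (le_of_eq hcard.symm)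
  calc ∑ r ∈ Finset.Icc (1 : ℤ) (d : ℤ), x r % d
      = ∑ j ∈ (Finset.Icc (1 : ℤ) (d : ℤ)).image (fun r => x r % d), j :=
        (Finset.sum_image (f := fun j => (j : ℤ)) hx).symm
    _ = ∑ j ∈ Finset.Ico (0 : ℤ) (d : ℤ), j := by rw [himg]

/-- for `w` in the extended affine symmetric group `Ŝ_d`,
`Inv_i(w) − inv_i(w) = w(i) − i − a(w)`. -/
theorem stmt15 (d : ℕ) (hd : 0 < d) (w : Perm ℤ)
    (hw : ∀ i : ℤ, w (i + d) = w i + d) (i : ℤ) :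
    (aInv w i : ℤ) - (ainv w i : ℤ) = w i - i - aShift d w := by
  have hd' : (0 : ℤ) < d := by exact_mod_cast hd
  have hdz : (d : ℤ) ≠ 0 := ne_of_gt hd'
  have hper : ∀ j k : ℤ, w (j + k * d) = w j + k * d := shift_per d w hw
  have hid : ∀ j k : ℤ, (id : ℤ → ℤ) (j + k * d) = id j + k * d := fun j k => rfl
  have hainv : (ainv w i : ℤ)
      = ∑ r ∈ Finset.Icc (1 : ℤ) (d : ℤ), (((i - r - 1) / d - (w i - w r) / d).toNat : ℤ) := by
    have h1 := count_set d hd id (⇑w) hid hper i (w i)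
    simp only [id_eq] at h1
    unfold ainv
    rw [h1]
    push_cast
    rfl
  have haInv : (aInv w i : ℤ)
      = ∑ r ∈ Finset.Icc (1 : ℤ) (d : ℤ), (((w i - w r - 1) / d - (i - r) / d).toNat : ℤ) := by
    have h1 := count_set d hd (⇑w) id hper hid (w i) i
    simp only [id_eq] at h1
    have hset : {i' : ℤ | i < i' ∧ w i' < w i} = {i' : ℤ | w i' < w i ∧ i < i'} := by
      ext i'; exact and_comm
    unfold aInv
    rw [hset, h1]
    push_cast
    rfl
  rw [hainv, haInv, ← Finset.sum_sub_distrib]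
  have hkey : ∀ r ∈ Finset.Icc (1 : ℤ) (d : ℤ),
      ((((w i - w r - 1) / d - (i - r) / d).toNat : ℤ))
        - (((i - r - 1) / d - (w i - w r) / d).toNat : ℤ)
      = (w i - w r) / d - (i - r) / d := by
    intro r _
    refine key_sub d hd (w i - w r) (i - r) ?_ ?_
    · rintro ⟨t, ht⟩
      have hc : (d : ℤ) * t = t * d := mul_comm _ _
      have hi : i = r + t * d := by omega
      have := hper r t
      rw [← hi] at this
      omega
    · intro h
      have := w_mod_inj d w hper h
      exact this
  rw [Finset.sum_congr rfl hkey, Finset.sum_sub_distrib]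
  -- now pure arithmetic with sums
  have hcard : (Finset.Icc (1 : ℤ) (d : ℤ)).card = d := by
    rw [Int.card_Icc]; omega
  have e1 : ∀ C : ℤ, (d : ℤ) * (C / d) = C - C % d := by
    intro C
    have := Int.mul_ediv_add_emod C d
    omega
  -- sums of emods agree
  have hxA : ∀ r ∈ Finset.Icc (1 : ℤ) (d : ℤ), ∀ r' ∈ Finset.Icc (1 : ℤ) (d : ℤ),
      (w i - w r) % d = (w i - w r') % d → r = r' := by
    intro r hr r' hr' h
    simp only [Finset.mem_Icc] at hr hr'
    have hdvd : (d : ℤ) ∣ ((w i - w r') - (w i - w r)) := Int.ModEq.dvd h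
    have : (d : ℤ) ∣ (w r - w r') := by
      obtain ⟨t, ht⟩ := hdvd; exact ⟨t, by omega⟩
    exact eq_of_small_dvd d hd' (w_mod_inj d w hper this) hr.1 hr.2 hr'.1 hr'.2
  have hxB : ∀ r ∈ Finset.Icc (1 : ℤ) (d : ℤ), ∀ r' ∈ Finset.Icc (1 : ℤ) (d : ℤ),
      (i - r) % d = (i - r') % d → r = r' := by
    intro r hr r' hr' h
    simp only [Finset.mem_Icc] at hr hr'
    have hdvd : (d : ℤ) ∣ ((i - r') - (i - r)) := Int.ModEq.dvd h
    have : (d : ℤ) ∣ (r - r') := by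
      obtain ⟨t, ht⟩ := hdvd; exact ⟨t, by omega⟩
    exact eq_of_small_dvd d hd' this hr.1 hr.2 hr'.1 hr'.2
  have hxw : ∀ r ∈ Finset.Icc (1 : ℤ) (d : ℤ), ∀ r' ∈ Finset.Icc (1 : ℤ) (d : ℤ),
      (w r) % d = (w r') % d → r = r' := by
    intro r hr r' hr' h
    simp only [Finset.mem_Icc] at hr hr'
    have hdvd : (d : ℤ) ∣ (w r' - w r) := Int.ModEq.dvd h
    have : (d : ℤ) ∣ (w r - w r') := by
      obtain ⟨t, ht⟩ := hdvd; exact ⟨-t, by rw [mul_neg]; omega⟩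
    exact eq_of_small_dvd d hd' (w_mod_inj d w hper this) hr.1 hr.2 hr'.1 hr'.2
  have hxr : ∀ r ∈ Finset.Icc (1 : ℤ) (d : ℤ), ∀ r' ∈ Finset.Icc (1 : ℤ) (d : ℤ),
      r % (d : ℤ) = r' % (d : ℤ) → r = r' := by
    intro r hr r' hr' h
    simp only [Finset.mem_Icc] at hr hr'
    have hdvd : (d : ℤ) ∣ (r' - r) := Int.ModEq.dvd h
    have : (d : ℤ) ∣ (r - r') := by
      obtain ⟨t, ht⟩ := hdvd; exact ⟨-t, by rw [mul_neg]; omega⟩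
    exact eq_of_small_dvd d hd' this hr.1 hr.2 hr'.1 hr'.2
  have hemodAB : ∑ r ∈ Finset.Icc (1 : ℤ) (d : ℤ), (w i - w r) % d
      = ∑ r ∈ Finset.Icc (1 : ℤ) (d : ℤ), (i - r) % d := by
    rw [sum_emod d hd _ hxA, sum_emod d hd _ hxB]
  -- aShift is exact division
  have hdvdsum : (d : ℤ) ∣ ∑ k ∈ Finset.Icc (1 : ℤ) (d : ℤ), (w k - k) := by
    have h1 : (∑ k ∈ Finset.Icc (1 : ℤ) (d : ℤ), (w k : ℤ)) % d
        = (∑ k ∈ Finset.Icc (1 : ℤ) (d : ℤ), k) % d := by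
      rw [Finset.sum_int_mod _ _ (fun k => (w k : ℤ)),
        Finset.sum_int_mod _ _ (fun k => k),
        sum_emod d hd _ hxw, sum_emod d hd _ hxr]
    have h2 : (d : ℤ) ∣ ((∑ k ∈ Finset.Icc (1 : ℤ) (d : ℤ), k)
        - (∑ k ∈ Finset.Icc (1 : ℤ) (d : ℤ), (w k : ℤ))) := Int.ModEq.dvd h1
    rw [Finset.sum_sub_distrib]
    have h3 := dvd_neg.mpr h2
    rw [neg_sub] at h3
    exact h3
  have hsh : (d : ℤ) * aShift d w = ∑ k ∈ Finset.Icc (1 : ℤ) (d : ℤ), (w k - k) := by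
    unfold aShift
    exact Int.mul_ediv_cancel' hdvdsum
  apply mul_left_cancel₀ hdz
  rw [mul_sub, Finset.mul_sum, Finset.mul_sum]
  simp only [e1]
  have hA : ∑ x ∈ Finset.Icc (1 : ℤ) (d : ℤ), (w i - w x)
      = (d : ℤ) * w i - ∑ x ∈ Finset.Icc (1 : ℤ) (d : ℤ), (w x : ℤ) := by
    rw [Finset.sum_sub_distrib, Finset.sum_const, hcard, nsmul_eq_mul]
  have hB : ∑ x ∈ Finset.Icc (1 : ℤ) (d : ℤ), (i - x)
      = (d : ℤ) * i - ∑ x ∈ Finset.Icc (1 : ℤ) (d : ℤ), x := by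
    rw [Finset.sum_sub_distrib, Finset.sum_const, hcard, nsmul_eq_mul]
  have hC : ∑ k ∈ Finset.Icc (1 : ℤ) (d : ℤ), ((w k : ℤ) - k)
      = (∑ x ∈ Finset.Icc (1 : ℤ) (d : ℤ), (w x : ℤ))
        - ∑ x ∈ Finset.Icc (1 : ℤ) (d : ℤ), x := Finset.sum_sub_distrib _ _
  rw [Finset.sum_sub_distrib (f := fun x => w i - w x) (g := fun x => (w i - w x) % (d : ℤ)),
    hA, Finset.sum_sub_distrib (f := fun x => i - x) (g := fun x => (i - x) % (d : ℤ)), hB,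
    hemodAB]
  rw [hC] at hsh
  linear_combination hsh
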